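/- Suppose |b(i)| ≤ 1 for all i. The subvertex q_* = Σ_{i=0}^m b''(i)·e_{ν_i}, where b''(i) = (b(i)+1)/2 for i ≥ 1 and b''(0) = 1 − Σ_{i=1}^m b''(i), belongs to P(b) if and only if (1/m)Σ_{i=1}^m b(i) ≤ 2/m − 1; and in that case q_* is a vertex of P(b). -/

import Mathlib

open Finset

/-- The value λ(k) for λ ∈ Λ = {0,1}^m, extended by the conventions λ(0) = 0 and
λ(m+1) = 1 (positions 1,…,m carry the actual values of λ). -/
def lamExt (m : ℕ) (lam : Fin m → Bool) (k : ℕ) : ℕ :=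
  if h : 1 ≤ k ∧ k ≤ m then (if lam ⟨k - 1, by omega⟩ then 1 else 0)
  else if k = 0 then 0 else 1

/-- The vector ℓ_i ∈ ℝ^Λ, ℓ_i(λ) = (−1)^{λ(i)}, for 0 ≤ i ≤ m. -/
def ell (m : ℕ) (i : ℕ) (lam : Fin m → Bool) : ℝ := (-1) ^ lamExt m lam i

/-- The standard inner product on ℝ^Λ. -/
def ip (m : ℕ) (x y : (Fin m → Bool) → ℝ) : ℝ := ∑ lam : Fin m → Bool, x lam * y lam

/-- The polytope P(b). -/
def Pb (m : ℕ) (b : ℕ → ℝ) : Set ((Fin m → Bool) → ℝ) :=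
  {x | ip m (ell m 0) x = 1 ∧ (∀ i ∈ Finset.Icc 1 m, ip m (ell m i) x = b i) ∧
    ∀ lam, 0 ≤ x lam}

/-- b''(i) = (b(i)+1)/2 for 1 ≤ i ≤ m and b''(0) = 1 − Σ_{i=1}^m b''(i). -/
noncomputable def b'' (m : ℕ) (b : ℕ → ℝ) (i : ℕ) : ℝ :=
  if i = 0 then 1 - ∑ j ∈ Finset.Icc 1 m, (b j + 1) / 2 else (b i + 1) / 2

/-- ν_j ∈ Λ: ν_j(k) = 1 − δ_{jk}; in particular ν_0 = (1,…,1). -/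
def nu (m j : ℕ) : Fin m → Bool := fun k => decide ((k : ℕ) + 1 ≠ j)

/-- The subvertex q_* = Σ_{i=0}^m b''(i)·e_{ν_i}. -/
noncomputable def subvertex (m : ℕ) (b : ℕ → ℝ) : (Fin m → Bool) → ℝ :=
  fun lam => ∑ i ∈ Finset.range (m + 1), b'' m b i * (if lam = nu m i then 1 else 0)


lemma nu_injOn (m : ℕ) {i j : ℕ} (hi : i ≤ m) (hj : j ≤ m) (h : nu m i = nu m j) : i = j := by
  by_contra hne
  rcases Nat.eq_zero_or_pos i with hi0 | hi1
  · subst hi0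
    have hj1 : 1 ≤ j := Nat.pos_of_ne_zero fun h0 => hne h0.symm
    have := congrFun h ⟨j - 1, by omega⟩
    simp only [nu, decide_eq_decide] at this
    omega
  · rcases Nat.eq_zero_or_pos j with hj0 | hj1
    · subst hj0
      have := congrFun h ⟨i - 1, by omega⟩
      simp only [nu, decide_eq_decide] at this
      omega
    · have := congrFun h ⟨i - 1, by omega⟩
      simp only [nu, decide_eq_decide] at this
      omega

lemma subvertex_nu (m : ℕ) (b : ℕ → ℝ) {j : ℕ} (hj : j ≤ m) :
    subvertex m b (nu m j) = b'' m b j := by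
  rw [subvertex, Finset.sum_eq_single j]
  · simp
  · intro i hi hij
    rw [if_neg, mul_zero]
    intro h
    exact hij (nu_injOn m (Nat.lt_succ_iff.mp (Finset.mem_range.mp hi)) hj h.symm)
  · intro h; exact absurd (Finset.mem_range.mpr (Nat.lt_succ_of_le hj)) h

lemma subvertex_ne (m : ℕ) (b : ℕ → ℝ) (lam : Fin m → Bool)
    (h : ∀ j ≤ m, lam ≠ nu m j) : subvertex m b lam = 0 := by
  rw [subvertex]
  apply Finset.sum_eq_zero
  intro i hi
  rw [if_neg (h i (Nat.lt_succ_iff.mp (Finset.mem_range.mp hi))), mul_zero]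

lemma sum_nu_eq (m : ℕ) (x : (Fin m → Bool) → ℝ)
    (hx : ∀ lam, (∀ j ≤ m, lam ≠ nu m j) → x lam = 0) :
    ∑ lam : Fin m → Bool, x lam = ∑ j ∈ Finset.range (m + 1), x (nu m j) := by
  have hinj : ∀ i ∈ Finset.range (m+1), ∀ j ∈ Finset.range (m+1), nu m i = nu m j → i = j := by
    intro i hi j hj h
    exact nu_injOn m (Nat.lt_succ_iff.mp (Finset.mem_range.mp hi))
      (Nat.lt_succ_iff.mp (Finset.mem_range.mp hj)) h
  rw [← Finset.sum_image hinj]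
  exact (Finset.sum_subset (Finset.subset_univ _) (fun lam _ hnot =>
    hx lam (fun j hj hlam => hnot (Finset.mem_image.mpr
      ⟨j, Finset.mem_range.mpr (Nat.lt_succ_of_le hj), hlam.symm⟩)))).symm

lemma ell_zero_apply (m : ℕ) (lam : Fin m → Bool) : ell m 0 lam = 1 := by
  simp [ell, lamExt]

lemma ip_ell_zero (m : ℕ) (x : (Fin m → Bool) → ℝ) :
    ip m (ell m 0) x = ∑ lam : Fin m → Bool, x lam := by
  unfold ip
  exact Finset.sum_congr rfl fun lam _ => by rw [ell_zero_apply, one_mul]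

lemma ell_nu (m : ℕ) {i j : ℕ} (hi1 : 1 ≤ i) (him : i ≤ m) (hj : j ≤ m) :
    ell m i (nu m j) = if i = j then 1 else -1 := by
  rw [ell, lamExt, dif_pos ⟨hi1, him⟩]
  by_cases hij : i = j
  · have hf : nu m j ⟨i - 1, by omega⟩ = false := by
      simp only [nu, decide_eq_false_iff_not, not_not]
      omega
    rw [hf]
    simp [hij]
  · have ht : nu m j ⟨i - 1, by omega⟩ = true := by
      simp only [nu, decide_eq_true_eq]
      omega
    rw [ht]
    simp [hij]

lemma key_sum (m i : ℕ) (hi : i ≤ m) (x : ℕ → ℝ) :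
    ∑ j ∈ Finset.range (m + 1), (if i = j then (1:ℝ) else -1) * x j
      = 2 * x i - ∑ j ∈ Finset.range (m + 1), x j := by
  have h : ∀ j ∈ Finset.range (m+1),
      (if i = j then (1:ℝ) else -1) * x j = (if i = j then 2 * x j else 0) - x j := by
    intro j _; split <;> ring
  rw [Finset.sum_congr rfl h, Finset.sum_sub_distrib, Finset.sum_ite_eq,
    if_pos (Finset.mem_range.mpr (Nat.lt_succ_of_le hi))]

lemma sum_b'' (m : ℕ) (b : ℕ → ℝ) :
    ∑ j ∈ Finset.range (m + 1), b'' m b j = 1 := by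
  rw [Finset.sum_range_succ']
  have h1 : ∑ i ∈ Finset.range m, b'' m b (i + 1) = ∑ j ∈ Finset.Icc 1 m, (b j + 1) / 2 := by
    rw [← Finset.Ico_add_one_right_eq_Icc, Finset.sum_Ico_eq_sum_range, Nat.add_sub_cancel]
    refine Finset.sum_congr rfl fun i _ => ?_
    simp only [b'', Nat.succ_ne_zero, if_false]
    rw [Nat.add_comm i 1]
  rw [h1, show b'' m b 0 = 1 - ∑ j ∈ Finset.Icc 1 m, (b j + 1) / 2 from by simp [b'']]
  ring

lemma sum_Icc_half (m : ℕ) (b : ℕ → ℝ) :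
    ∑ j ∈ Finset.Icc 1 m, (b j + 1) / 2 = ((∑ j ∈ Finset.Icc 1 m, b j) + m) / 2 := by
  have h : ∀ j ∈ Finset.Icc 1 m, (b j + 1) / 2 = b j / 2 + 1 / 2 := fun j _ => by ring
  rw [Finset.sum_congr rfl h, Finset.sum_add_distrib, Finset.sum_const, Nat.card_Icc,
    Nat.add_sub_cancel, nsmul_eq_mul, ← Finset.sum_div]
  ring

lemma eq_subvertex (m : ℕ) (b : ℕ → ℝ) (x : (Fin m → Bool) → ℝ)
    (hx : x ∈ Pb m b)
    (hsupp : ∀ lam, (∀ j ≤ m, lam ≠ nu m j) → x lam = 0) :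
    x = subvertex m b := by
  obtain ⟨h0, hc, hpos⟩ := hx
  have hsum1 : ∑ j ∈ Finset.range (m + 1), x (nu m j) = 1 := by
    rw [← sum_nu_eq m x hsupp, ← ip_ell_zero m x]
    exact h0
  have hxi : ∀ i, 1 ≤ i → i ≤ m → x (nu m i) = (b i + 1) / 2 := by
    intro i hi1 him
    have hci := hc i (Finset.mem_Icc.mpr ⟨hi1, him⟩)
    have he : ip m (ell m i) x
        = ∑ j ∈ Finset.range (m + 1), (if i = j then (1:ℝ) else -1) * x (nu m j) := by
      unfold ip
      rw [sum_nu_eq m (fun lam => ell m i lam * x lam)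
        (fun lam hl => by show ell m i lam * x lam = 0; rw [hsupp lam hl, mul_zero])]
      exact Finset.sum_congr rfl fun j hj => by
        rw [ell_nu m hi1 him (Nat.lt_succ_iff.mp (Finset.mem_range.mp hj))]
    rw [he, key_sum m i him, hsum1] at hci
    linarith
  have hx0 : x (nu m 0) = b'' m b 0 := by
    have h2 : ∑ j ∈ Finset.range (m + 1), x (nu m j)
        = (∑ j ∈ Finset.range m, x (nu m (j + 1))) + x (nu m 0) :=
      Finset.sum_range_succ' _ m
    have h3 : ∑ j ∈ Finset.range m, x (nu m (j + 1)) = ∑ j ∈ Finset.Icc 1 m, (b j + 1) / 2 := by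
      rw [← Finset.Ico_add_one_right_eq_Icc, Finset.sum_Ico_eq_sum_range, Nat.add_sub_cancel]
      refine Finset.sum_congr rfl fun i hi => ?_
      have hilt := Finset.mem_range.mp hi
      rw [hxi (i + 1) (by omega) (by omega), Nat.add_comm i 1]
    rw [show b'' m b 0 = 1 - ∑ j ∈ Finset.Icc 1 m, (b j + 1) / 2 from by simp [b'']]
    linarith [hsum1, h2.symm.trans hsum1, h3]
  funext lam
  by_cases h : ∃ j, j ≤ m ∧ lam = nu m j
  · obtain ⟨j, hj, rfl⟩ := h
    rw [subvertex_nu m b hj]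
    rcases Nat.eq_zero_or_pos j with rfl | hj1
    · exact hx0
    · rw [hxi j hj1 hj]
      simp [b'', Nat.pos_iff_ne_zero.mp hj1]
  · push_neg at h
    rw [hsupp lam (fun j hj => h j hj), subvertex_ne m b lam (fun j hj => h j hj)]

/-- If |b(i)| ≤ 1 for all i, the subvertex belongs to P(b) iff
(1/m)Σ b(i) ≤ 2/m − 1, and in that case it is a vertex (extreme point) of P(b). -/
theorem stmt12 (m : ℕ) (hm : 1 ≤ m) (b : ℕ → ℝ)
    (hb : ∀ i ∈ Finset.Icc 1 m, |b i| ≤ 1) :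
    (subvertex m b ∈ Pb m b ↔
      (m : ℝ)⁻¹ * ∑ i ∈ Finset.Icc 1 m, b i ≤ 2 / m - 1) ∧
    ((m : ℝ)⁻¹ * ∑ i ∈ Finset.Icc 1 m, b i ≤ 2 / m - 1 →
      subvertex m b ∈ Set.extremePoints ℝ (Pb m b)) := by
  have hm0 : (0:ℝ) < m := by exact_mod_cast hm
  have hb0eq : b'' m b 0 = 1 - ((∑ j ∈ Finset.Icc 1 m, b j) + m) / 2 := by
    rw [show b'' m b 0 = 1 - ∑ j ∈ Finset.Icc 1 m, (b j + 1) / 2 from by simp [b''],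
      sum_Icc_half]
  have hineq : ((m : ℝ)⁻¹ * ∑ i ∈ Finset.Icc 1 m, b i ≤ 2 / m - 1) ↔ 0 ≤ b'' m b 0 := by
    rw [inv_mul_le_iff₀ hm0, show (m : ℝ) * (2 / m - 1) = 2 - m from by field_simp, hb0eq]
    constructor <;> intro <;> linarith
  have hmem : subvertex m b ∈ Pb m b ↔ 0 ≤ b'' m b 0 := by
    constructor
    · rintro ⟨-, -, hpos⟩
      have := hpos (nu m 0)
      rwa [subvertex_nu m b (Nat.zero_le m)] at this
    · intro h0
      have hb''pos : ∀ i ∈ Finset.range (m + 1), 0 ≤ b'' m b i := by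
        intro i hi
        rcases Nat.eq_zero_or_pos i with rfl | hi1
        · exact h0
        · have hbi := abs_le.mp (hb i (Finset.mem_Icc.mpr
            ⟨hi1, Nat.lt_succ_iff.mp (Finset.mem_range.mp hi)⟩))
          rw [show b'' m b i = (b i + 1) / 2 from by simp [b'', Nat.pos_iff_ne_zero.mp hi1]]
          linarith [hbi.1]
      refine ⟨?_, ?_, ?_⟩
      · rw [ip_ell_zero, sum_nu_eq m _ (subvertex_ne m b),
          Finset.sum_congr rfl (fun j hj =>
            subvertex_nu m b (Nat.lt_succ_iff.mp (Finset.mem_range.mp hj)))]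
        exact sum_b'' m b
      · intro i hi
        obtain ⟨hi1, him⟩ := Finset.mem_Icc.mp hi
        unfold ip
        rw [sum_nu_eq m (fun lam => ell m i lam * subvertex m b lam)
          (fun lam hl => by
            show ell m i lam * subvertex m b lam = 0
            rw [subvertex_ne m b lam hl, mul_zero]),
          Finset.sum_congr rfl (fun j hj => by
            rw [subvertex_nu m b (Nat.lt_succ_iff.mp (Finset.mem_range.mp hj)),
              ell_nu m hi1 him (Nat.lt_succ_iff.mp (Finset.mem_range.mp hj))]),
          key_sum m i him, sum_b'' m b,
          show b'' m b i = (b i + 1) / 2 from by simp [b'', Nat.pos_iff_ne_zero.mp hi1]]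
        ring
      · intro lam
        apply Finset.sum_nonneg
        intro i hi
        exact mul_nonneg (hb''pos i hi) (by split <;> norm_num)
  refine ⟨hmem.trans hineq.symm, ?_⟩
  intro hle
  have hq : subvertex m b ∈ Pb m b := hmem.mpr (hineq.mp hle)
  rw [mem_extremePoints]
  refine ⟨hq, ?_⟩
  intro x hx y hy hseg
  obtain ⟨a, c, ha, hc, hac, habc⟩ := hseg
  have hzero : ∀ lam, (∀ j ≤ m, lam ≠ nu m j) → x lam = 0 ∧ y lam = 0 := by
    intro lam hlam
    have hq0 : a * x lam + c * y lam = 0 := by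
      have h := congrFun habc lam
      simp only [Pi.add_apply, Pi.smul_apply, smul_eq_mul] at h
      rw [h, subvertex_ne m b lam hlam]
    have hx0 := hx.2.2 lam
    have hy0 := hy.2.2 lam
    have hax : a * x lam = 0 := by
      have h1 : 0 ≤ a * x lam := mul_nonneg ha.le hx0
      have h2 : 0 ≤ c * y lam := mul_nonneg hc.le hy0
      linarith
    have hcy : c * y lam = 0 := by linarith [mul_nonneg ha.le hx0, mul_nonneg hc.le hy0]
    exact ⟨(mul_eq_zero.mp hax).resolve_left (ne_of_gt ha),
      (mul_eq_zero.mp hcy).resolve_left (ne_of_gt hc)⟩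
  exact ⟨eq_subvertex m b x hx (fun lam h => (hzero lam h).1),
    eq_subvertex m b y hy (fun lam h => (hzero lam h).2)⟩
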